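/- Let N ≥ 3 be an odd integer. Let x ∈ [0,1] be irrational, let k be an odd integer, and let p ≥ 0 be an integer with x + k/N^p ∈ [0,1]. Then there is no f ∈ F(N) with f(x) = x + k/N^p. -/

import Mathlib

/-- A real number is an `N`-adic rational if it equals `k / N^m` for some `k : ℤ`, `m : ℕ`. -/
def IsNAdic (N : ℕ) (x : ℝ) : Prop :=
  ∃ (k : ℤ) (m : ℕ), x = (k : ℝ) / (N : ℝ) ^ m

/-- Membership (as a map of `[0,1]`) in the generalized Thompson group `F(N)`:
`f 0 = 0`, `f 1 = 1`, and there is a finite partition `0 = a 0 < a 1 < ⋯ < a n = 1`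
of `[0,1]` by `N`-adic rationals such that on each piece `[a i, a (i+1)]` the map `f`
is affine with slope an integer power of `N`.  (Such an `f` is automatically an
increasing piecewise-linear homeomorphism of `[0,1]` onto itself, with all
non-differentiability points `N`-adic.) -/
def InFN (N : ℕ) (f : ℝ → ℝ) : Prop :=
  f 0 = 0 ∧ f 1 = 1 ∧
    ∃ (n : ℕ) (a : ℕ → ℝ), 0 < n ∧ a 0 = 0 ∧ a n = 1 ∧
      (∀ i < n, a i < a (i + 1)) ∧
      (∀ i ≤ n, IsNAdic N (a i)) ∧
      (∀ i < n, ∃ q : ℤ, ∀ x ∈ Set.Icc (a i) (a (i + 1)),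
        f x = f (a i) + (N : ℝ) ^ q * (x - a i))

/-- `t = 2c/N^m` for some integers. -/
def E' (N : ℕ) (t : ℝ) : Prop := ∃ (c : ℤ) (m : ℕ), t = 2 * c / (N : ℝ) ^ m

lemma E'_add {N : ℕ} (hN : 0 < N) {s t : ℝ} (hs : E' N s) (ht : E' N t) : E' N (s + t) := by
  obtain ⟨c, m, rfl⟩ := hs
  obtain ⟨c', m', rfl⟩ := ht
  refine ⟨c * (N : ℤ) ^ m' + c' * (N : ℤ) ^ m, m + m', ?_⟩
  have hN0 : (N : ℝ) ≠ 0 := by positivity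
  field_simp
  push_cast
  ring


lemma zpow_repr (N : ℕ) (hN : 0 < N) (q : ℤ) :
    ∃ s r : ℕ, (s : ℤ) - r = q ∧ (N : ℝ) ^ q = (N : ℝ) ^ s / (N : ℝ) ^ r := by
  refine ⟨(q + q.natAbs).toNat, q.natAbs, ?_, ?_⟩
  · omega
  · have hN0 : (N : ℝ) ≠ 0 := by positivity
    rw [← zpow_natCast (N:ℝ), ← zpow_natCast (N:ℝ) q.natAbs, ← zpow_sub₀ hN0]
    congr 1
    omega

lemma E'_mul {N : ℕ} (hN : 0 < N) (hodd : Odd N) (q : ℤ) {d : ℝ} (hd : IsNAdic N d) :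
    E' N (((N : ℝ) ^ q - 1) * d) := by
  obtain ⟨b, m, rfl⟩ := hd
  obtain ⟨s, r, hsr, hpow⟩ := zpow_repr N hN q
  have hoddZ : Odd (N : ℤ) := Int.odd_coe_nat N |>.mpr hodd
  have heven : Even ((N : ℤ) ^ s - (N : ℤ) ^ r) := (hoddZ.pow).sub_odd hoddZ.pow
  obtain ⟨c, hc⟩ := heven
  refine ⟨c * b, r + m, ?_⟩
  have hN0 : (N : ℝ) ≠ 0 := by positivity
  have hcR : (N : ℝ) ^ s - (N : ℝ) ^ r = 2 * c := by
    have := congrArg (fun z : ℤ => (z : ℝ)) hc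
    push_cast at this
    linarith
  rw [hpow]
  field_simp
  push_cast
  linear_combination ((b:ℝ) * ((N:ℝ)^r * (N:ℝ)^m)) * hcR

lemma IsNAdic.sub' {N : ℕ} (hN : 0 < N) {s t : ℝ} (hs : IsNAdic N s) (ht : IsNAdic N t) :
    IsNAdic N (s - t) := by
  obtain ⟨a, m, rfl⟩ := hs
  obtain ⟨b, m', rfl⟩ := ht
  refine ⟨a * (N : ℤ) ^ m' - b * (N : ℤ) ^ m, m + m', ?_⟩
  have hN0 : (N : ℝ) ≠ 0 := by positivity
  field_simp
  push_cast
  ring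


lemma exists_index (n : ℕ) (a : ℕ → ℝ) (h0 : a 0 = 0) (h1 : a n = 1)
    (x : ℝ) (hx0 : 0 ≤ x) (hx1 : x < 1) :
    ∃ i < n, a i ≤ x ∧ x < a (i + 1) := by
  classical
  set i := Nat.findGreatest (fun i => a i ≤ x) n with hi
  have hP0 : a 0 ≤ x := by rw [h0]; exact hx0
  have hPi : a i ≤ x := Nat.findGreatest_spec (P := fun i => a i ≤ x) (Nat.zero_le n) hP0
  have hile : i ≤ n := Nat.findGreatest_le n
  have hne : i ≠ n := by intro h; rw [h, h1] at hPi; linarith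
  have hilt : i < n := lt_of_le_of_ne hile hne
  refine ⟨i, hilt, hPi, ?_⟩
  have := Nat.findGreatest_is_greatest (Nat.lt_succ_self i) (by omega : i + 1 ≤ n)
  exact lt_of_not_ge this

/-- Let `N ≥ 3` be odd, `x ∈ [0,1]` irrational, `k` an odd integer and
`p ≥ 0` with `x + k/N^p ∈ [0,1]`.  Then no `f ∈ F(N)` satisfies `f(x) = x + k/N^p`. -/
theorem statement7 (N : ℕ) (hN : 3 ≤ N) (hNodd : Odd N)
    (x : ℝ) (hx : x ∈ Set.Icc (0 : ℝ) 1) (hxirr : Irrational x)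
    (k : ℤ) (hk : Odd k) (p : ℕ)
    (hin : x + (k : ℝ) / (N : ℝ) ^ p ∈ Set.Icc (0 : ℝ) 1) :
    ¬ ∃ f : ℝ → ℝ, InFN N f ∧ f x = x + (k : ℝ) / (N : ℝ) ^ p := by
  have hNpos : 0 < N := by omega
  have hN0 : (N : ℝ) ≠ 0 := by positivity
  rintro ⟨f, ⟨hf0, hf1, n, a, hn, ha0, han, hlt, hnadic, hslope⟩, heq⟩
  -- f(a i) - a i ∈ E' for all i ≤ n
  have key : ∀ i ≤ n, E' N (f (a i) - a i) := by
    intro i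
    induction i with
    | zero =>
      intro _
      rw [ha0, hf0]
      exact ⟨0, 0, by norm_num⟩
    | succ i ih =>
      intro hi1
      have hi : i < n := by omega
      obtain ⟨q, hq⟩ := hslope i hi
      have hmem : a (i + 1) ∈ Set.Icc (a i) (a (i + 1)) :=
        ⟨(hlt i hi).le, le_refl _⟩
      have hfe := hq (a (i + 1)) hmem
      have hd : IsNAdic N (a (i + 1) - a i) :=
        IsNAdic.sub' hNpos (hnadic (i + 1) hi1) (hnadic i (by omega))
      have : f (a (i + 1)) - a (i + 1) =
          (f (a i) - a i) + ((N : ℝ) ^ q - 1) * (a (i + 1) - a i) := by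
        rw [hfe]; ring
      rw [this]
      exact E'_add hNpos (ih (by omega)) (E'_mul hNpos hNodd q hd)
  -- find the piece containing x
  have hx1 : x < 1 := lt_of_le_of_ne hx.2 (by simpa using hxirr.ne_int 1)
  obtain ⟨i, hi, hxle, hxlt⟩ := exists_index n a ha0 han x hx.1 hx1
  obtain ⟨q, hq⟩ := hslope i hi
  have hfx := hq x ⟨hxle, hxlt.le⟩
  rw [heq] at hfx
  obtain ⟨c, m, hcm⟩ := key i (by omega)
  -- rational data
  obtain ⟨ka, ma, hka⟩ := hnadic i (by omega)
  by_cases hq0 : q = 0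
  · -- slope 1: k/N^p = f(a i) - a i = 2c/N^m, parity contradiction
    rw [hq0] at hfx
    simp only [zpow_zero, one_mul] at hfx
    have hK : (k : ℝ) / (N : ℝ) ^ p = 2 * c / (N : ℝ) ^ m := by
      rw [← hcm]; linarith
    have hZ : (k : ℤ) * (N : ℤ) ^ m = 2 * c * (N : ℤ) ^ p := by
      have : (k : ℝ) * (N : ℝ) ^ m = 2 * c * (N : ℝ) ^ p := by
        field_simp at hK
        linarith [hK]
      exact_mod_cast this
    have hoddZ : Odd (N : ℤ) := Int.odd_coe_nat N |>.mpr hNodd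
    have h1 : Odd ((k : ℤ) * (N : ℤ) ^ m) := hk.mul hoddZ.pow
    rw [hZ] at h1
    exact (Int.not_odd_iff_even.mpr ⟨c * (N : ℤ) ^ p, by ring⟩) h1
  · -- slope ≠ 1: x is rational, contradiction
    have hQne : ((N : ℚ) ^ q : ℚ) ≠ 1 := by
      intro h
      have h1N : (1 : ℚ) < (N : ℚ) := by exact_mod_cast (by omega : 1 < N)
      have := (zpow_right_strictMono₀ h1N).injective (h.trans (zpow_zero (N:ℚ)).symm)
      exact hq0 this
    set rA : ℚ := (ka : ℚ) / (N : ℚ) ^ ma with hrA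
    set rT : ℚ := 2 * c / (N : ℚ) ^ m with hrT
    set rK : ℚ := (k : ℚ) / (N : ℚ) ^ p with hrK
    set rQ : ℚ := (N : ℚ) ^ q with hrQ
    have hAc : (rA : ℝ) = a i := by rw [hrA, hka]; push_cast; ring
    have hTc : (rT : ℝ) = f (a i) - a i := by rw [hrT, hcm]; push_cast; ring
    have hKc : (rK : ℝ) = (k : ℝ) / (N : ℝ) ^ p := by rw [hrK]; push_cast; ring
    have hQc : (rQ : ℝ) = (N : ℝ) ^ q := by rw [hrQ]; push_cast; ring
    have h1Q : (1 : ℝ) - (rQ : ℝ) ≠ 0 := by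
      intro h
      apply hQne
      have : (rQ : ℝ) = 1 := by linarith
      exact_mod_cast this
    have hQne' : (1 : ℝ) - (N : ℝ) ^ q ≠ 0 := by rw [← hQc]; exact h1Q
    have h2 : x * (1 - (N : ℝ) ^ q) =
        a i * (1 - (N : ℝ) ^ q) + ((f (a i) - a i) - (k : ℝ) / (N : ℝ) ^ p) := by
      linear_combination hfx
    refine hxirr ⟨rA + (rT - rK) / (1 - rQ), ?_⟩
    push_cast
    rw [hAc, hTc, hKc, hQc]
    rw [eq_comm, ← sub_eq_iff_eq_add']
    rw [eq_div_iff hQne']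
    linear_combination h2
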